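/- arXiv:1103.3557 — 2 statements merged into one kernel-verified Lean document; each statement's English description precedes it below -/
import Mathlib

section
/- Let K₁,…,K_m be n×n complex matrices with Σᵢ Kᵢ† Kᵢ = I, and suppose that for every unit vector φ ∈ ℂⁿ one has Σ_{i,j} |⟨φ| Kᵢ† Kⱼ |φ⟩|² ≤ 1 − ε for some ε ∈ (0,1). Then (1/n²) Σ_{i,j} |Tr(Kᵢ† Kⱼ)|² ≤ 1 − (1 + 1/n)ε. -/
open Matrix Complex Finset
open scoped ComplexConjugate

/- ------------------ phase orthogonality ------------------- -/

lemma sum_pow_I' (p q : ℕ) (hp : p ≤ 2) (hq : q ≤ 2) :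
    ∑ k : Fin 4, (Complex.I ^ (k : ℕ)) ^ p * (conj (Complex.I ^ (k : ℕ))) ^ q
      = if p = q then 4 else 0 := by
  interval_cases p <;> interval_cases q <;>
    simp only [Fin.sum_univ_four, show ((0:Fin 4):ℕ)=0 from rfl,
      show ((1:Fin 4):ℕ)=1 from rfl, show ((2:Fin 4):ℕ)=2 from rfl,
      show ((3:Fin 4):ℕ)=3 from rfl, pow_succ, pow_zero, map_pow, _root_.map_one, Complex.conj_I,
      one_mul, mul_one] <;>
    norm_num [Complex.ext_iff]

lemma ind_cond' {n : ℕ} {a b c d : Fin n}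
    (h : ∀ e : Fin n, ((if e = b then 1 else 0) + (if e = c then 1 else 0) : ℕ)
        = (if e = a then 1 else 0) + (if e = d then 1 else 0)) :
    (a = b ∧ c = d) ∨ (a = c ∧ b = d) := by
  have ha := h a; have hb := h b; have hc := h c; have hd := h d
  by_cases hab : a = b <;> by_cases hac : a = c <;> by_cases had : a = d <;>
    by_cases hbc : b = c <;> by_cases hbd : b = d <;> by_cases hcd : c = d <;>
    simp_all

lemma term_factor' {n : ℕ} (ζ : Fin n → Fin 4) (a b c d : Fin n) :
    conj (Complex.I ^ (ζ a : ℕ)) * Complex.I ^ (ζ b : ℕ) * Complex.I ^ (ζ c : ℕ)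
      * conj (Complex.I ^ (ζ d : ℕ))
    = ∏ e : Fin n, ((Complex.I ^ (ζ e : ℕ)) ^ ((if e = b then 1 else 0) + (if e = c then 1 else 0))
        * (conj (Complex.I ^ (ζ e : ℕ))) ^ ((if e = a then 1 else 0) + (if e = d then 1 else 0))) := by
  simp only [pow_add, Finset.prod_mul_distrib, pow_ite, pow_one, pow_zero]
  rw [Finset.prod_ite_eq' univ b, Finset.prod_ite_eq' univ c,
      Finset.prod_ite_eq' univ a, Finset.prod_ite_eq' univ d]
  simp [mul_comm, mul_assoc, mul_left_comm]

lemma phase_orth' {n : ℕ} (a b c d : Fin n) :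
    ∑ ζ : Fin n → Fin 4, conj (Complex.I ^ (ζ a : ℕ)) * Complex.I ^ (ζ b : ℕ)
        * Complex.I ^ (ζ c : ℕ) * conj (Complex.I ^ (ζ d : ℕ))
    = if (a = b ∧ c = d) ∨ (a = c ∧ b = d) then (4 : ℂ) ^ n else 0 := by
  simp only [term_factor']
  rw [← Fintype.prod_sum fun (e : Fin n) (k : Fin 4) =>
      ((Complex.I ^ (k : ℕ)) ^ ((if e = b then 1 else 0) + (if e = c then 1 else 0))
        * (conj (Complex.I ^ (k : ℕ))) ^ ((if e = a then 1 else 0) + (if e = d then 1 else 0)))]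
  have hfac : ∀ e : Fin n,
      (∑ k : Fin 4, (Complex.I ^ (k : ℕ)) ^ ((if e = b then 1 else 0) + (if e = c then 1 else 0))
        * (conj (Complex.I ^ (k : ℕ))) ^ ((if e = a then 1 else 0) + (if e = d then 1 else 0)))
      = if ((if e = b then 1 else 0) + (if e = c then 1 else 0) : ℕ)
          = (if e = a then 1 else 0) + (if e = d then 1 else 0) then 4 else 0 := by
    intro e
    refine sum_pow_I' _ _ ?_ ?_ <;> split_ifs <;> omega
  simp only [hfac]
  by_cases hall : ∀ e : Fin n, ((if e = b then 1 else 0) + (if e = c then 1 else 0) : ℕ)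
      = (if e = a then 1 else 0) + (if e = d then 1 else 0)
  · have hcond : (a = b ∧ c = d) ∨ (a = c ∧ b = d) := ind_cond' hall
    simp only [if_pos hcond]
    rw [Finset.prod_congr rfl fun e _ => if_pos (hall e)]
    simp
  · push_neg at hall
    obtain ⟨e₀, he₀⟩ := hall
    have hcond : ¬ ((a = b ∧ c = d) ∨ (a = c ∧ b = d)) := by
      rintro (⟨rfl, rfl⟩ | ⟨rfl, rfl⟩) <;> exact he₀ (by omega)
    rw [if_neg hcond]
    exact Finset.prod_eq_zero (Finset.mem_univ e₀) (if_neg he₀)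

lemma phase_orth'' {n : ℕ} (a b c d : Fin n) :
    ∑ ζ : Fin n → Fin 4, conj (Complex.I ^ (ζ a : ℕ)) * Complex.I ^ (ζ b : ℕ)
        * Complex.I ^ (ζ c : ℕ) * conj (Complex.I ^ (ζ d : ℕ))
    = (if a = b ∧ c = d then (4 : ℂ) ^ n else 0) + (if a = c ∧ b = d then (4 : ℂ) ^ n else 0)
        - (if a = b ∧ c = d ∧ a = c ∧ b = d then (4 : ℂ) ^ n else 0) := by
  rw [phase_orth']
  by_cases h1 : a = b ∧ c = d <;> by_cases h2 : a = c ∧ b = d <;> simp [h1, h2] <;> tauto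

/- ------------------ phase averaging identity ------------------- -/

lemma phase_sum' {n : ℕ} (M : Matrix (Fin n) (Fin n) ℂ) :
    ∑ ζ : Fin n → Fin 4,
      (∑ a, ∑ b, conj (Complex.I ^ (ζ a : ℕ)) * M a b * Complex.I ^ (ζ b : ℕ)) *
      conj (∑ a, ∑ b, conj (Complex.I ^ (ζ a : ℕ)) * M a b * Complex.I ^ (ζ b : ℕ))
    = 4 ^ n * (M.trace * conj M.trace + (∑ a, ∑ b, M a b * conj (M a b))
        - ∑ a, M a a * conj (M a a)) := by
  have step1 : ∀ ζ : Fin n → Fin 4,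
      (∑ a, ∑ b, conj (Complex.I ^ (ζ a : ℕ)) * M a b * Complex.I ^ (ζ b : ℕ)) *
      conj (∑ a, ∑ b, conj (Complex.I ^ (ζ a : ℕ)) * M a b * Complex.I ^ (ζ b : ℕ))
      = ∑ a, ∑ b, ∑ c, ∑ d, M d c * conj (M a b) *
          (conj (Complex.I ^ (ζ d : ℕ)) * Complex.I ^ (ζ c : ℕ)
            * Complex.I ^ (ζ a : ℕ) * conj (Complex.I ^ (ζ b : ℕ))) := by
    intro ζ
    simp only [map_sum, _root_.map_mul, Complex.conj_conj, Finset.sum_mul, Finset.mul_sum]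
    refine Finset.sum_congr rfl fun a _ => Finset.sum_congr rfl fun b _ => ?_
    rw [Finset.sum_comm]
    refine Finset.sum_congr rfl fun c _ => Finset.sum_congr rfl fun d _ => by ring
  simp only [step1]
  rw [Finset.sum_comm]
  have step2 : (∑ a : Fin n, ∑ ζ : Fin n → Fin 4, ∑ b, ∑ c, ∑ d, M d c * conj (M a b) *
          (conj (Complex.I ^ (ζ d : ℕ)) * Complex.I ^ (ζ c : ℕ)
            * Complex.I ^ (ζ a : ℕ) * conj (Complex.I ^ (ζ b : ℕ))))
      = ∑ a, ∑ b, ∑ c, ∑ d, M d c * conj (M a b) *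
          ((if d = c ∧ a = b then (4 : ℂ) ^ n else 0) + (if d = a ∧ c = b then (4 : ℂ) ^ n else 0)
            - (if d = c ∧ a = b ∧ d = a ∧ c = b then (4 : ℂ) ^ n else 0)) := by
    refine Finset.sum_congr rfl fun a _ => ?_
    rw [Finset.sum_comm]
    refine Finset.sum_congr rfl fun b _ => ?_
    rw [Finset.sum_comm]
    refine Finset.sum_congr rfl fun c _ => ?_
    rw [Finset.sum_comm]
    refine Finset.sum_congr rfl fun d _ => ?_
    rw [← Finset.mul_sum, phase_orth'' d c a b]
  rw [step2]
  simp only [mul_add, mul_sub, mul_ite, mul_zero, ite_and,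
    Finset.sum_add_distrib, Finset.sum_sub_distrib,
    Finset.sum_ite_eq, Finset.sum_ite_eq', Finset.mem_univ, if_true,
    Finset.sum_ite_irrel, Finset.sum_const_zero]
  simp only [Matrix.trace, Matrix.diag, map_sum, Finset.sum_mul, Finset.mul_sum]
  ring_nf

/-- real version -/
lemma phase_sum_re {n : ℕ} (M : Matrix (Fin n) (Fin n) ℂ) :
    ∑ ζ : Fin n → Fin 4,
      ‖∑ a, ∑ b, conj (Complex.I ^ (ζ a : ℕ)) * M a b * Complex.I ^ (ζ b : ℕ)‖ ^ 2
    = 4 ^ n * (‖M.trace‖ ^ 2 + (∑ a, ∑ b, ‖M a b‖ ^ 2) - ∑ a, ‖M a a‖ ^ 2) := by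
  have hns : ∀ z : ℂ, z * conj z = ((‖z‖ ^ 2 : ℝ) : ℂ) := by
    intro z
    rw [Complex.mul_conj]
    norm_cast
    rw [Complex.normSq_eq_norm_sq]
  have h := phase_sum' M
  simp only [hns] at h
  exact_mod_cast h

/- ------------------ Frobenius sum ------------------- -/

lemma norm_entry_sq (z : ℂ) : z * conj z = ((‖z‖ ^ 2 : ℝ) : ℂ) := by
  rw [Complex.mul_conj]
  norm_cast
  rw [Complex.normSq_eq_norm_sq]

lemma frob_sum' {n m : ℕ} (K : Fin m → Matrix (Fin n) (Fin n) ℂ) :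
    ∑ i, ∑ j, ∑ a, ∑ b, ‖((K i)ᴴ * K j) a b‖ ^ 2
      = ∑ p, ∑ q, ‖(∑ i, K i * (K i)ᴴ) p q‖ ^ 2 := by
  have h1 : ∀ N : Matrix (Fin n) (Fin n) ℂ, ((N * Nᴴ).trace) = ∑ a, ∑ b, ((‖N a b‖ ^ 2 : ℝ) : ℂ) := by
    intro N
    simp only [Matrix.trace, Matrix.diag, Matrix.mul_apply, Matrix.conjTranspose_apply,
      Complex.star_def]
    refine Finset.sum_congr rfl fun a _ => Finset.sum_congr rfl fun b _ => norm_entry_sq _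
  set A := ∑ i, K i * (K i)ᴴ with hA
  have hAherm : Aᴴ = A := by
    rw [hA, Matrix.conjTranspose_sum]
    exact Finset.sum_congr rfl fun i _ => by
      rw [Matrix.conjTranspose_mul, Matrix.conjTranspose_conjTranspose]
  have key : (∑ i, ∑ j, (((K i)ᴴ * K j) * ((K i)ᴴ * K j)ᴴ).trace) = (A * A).trace := by
    have h2 : ∀ i j : Fin m, (((K i)ᴴ * K j) * ((K i)ᴴ * K j)ᴴ).trace
        = ((K j * (K j)ᴴ) * (K i * (K i)ᴴ)).trace := by
      intro i j
      rw [Matrix.conjTranspose_mul, Matrix.conjTranspose_conjTranspose]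
      rw [show (K i)ᴴ * K j * ((K j)ᴴ * K i) = (K i)ᴴ * (K j * (K j)ᴴ * K i) by
        noncomm_ring]
      rw [Matrix.trace_mul_comm]
      rw [show K j * (K j)ᴴ * K i * (K i)ᴴ = K j * (K j)ᴴ * (K i * (K i)ᴴ) by noncomm_ring]
    simp only [h2]
    rw [Finset.sum_comm, hA]
    simp [Matrix.sum_mul, Matrix.mul_sum, Matrix.trace_sum]
    rw [Finset.sum_comm]
  have lhs_eq : (∑ i, ∑ j, ∑ a, ∑ b, ((‖((K i)ᴴ * K j) a b‖ ^ 2 : ℝ) : ℂ))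
      = ∑ p, ∑ q, ((‖A p q‖ ^ 2 : ℝ) : ℂ) := by
    calc (∑ i, ∑ j, ∑ a, ∑ b, ((‖((K i)ᴴ * K j) a b‖ ^ 2 : ℝ) : ℂ))
        = ∑ i, ∑ j, (((K i)ᴴ * K j) * ((K i)ᴴ * K j)ᴴ).trace := by
          exact Finset.sum_congr rfl fun i _ => Finset.sum_congr rfl fun j _ => (h1 _).symm
      _ = (A * A).trace := key
      _ = ∑ p, ∑ q, ((‖A p q‖ ^ 2 : ℝ) : ℂ) := by rw [← h1 A, hAherm]
  exact_mod_cast lhs_eq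

/- ------------------ trace of A and lower bound ------------------- -/

lemma traceA {n m : ℕ} (K : Fin m → Matrix (Fin n) (Fin n) ℂ)
    (hK : ∑ i, (K i)ᴴ * K i = 1) : (∑ i, K i * (K i)ᴴ).trace = (n : ℂ) := by
  rw [Matrix.trace_sum]
  have h : ∀ i, (K i * (K i)ᴴ).trace = ((K i)ᴴ * K i).trace :=
    fun i => Matrix.trace_mul_comm _ _
  simp only [h]
  rw [← Matrix.trace_sum, hK, Matrix.trace_one]
  simp

lemma frob_lower {n m : ℕ} (hn : 0 < n) (K : Fin m → Matrix (Fin n) (Fin n) ℂ)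
    (hK : ∑ i, (K i)ᴴ * K i = 1) :
    (n : ℝ) ≤ ∑ p, ∑ q, ‖(∑ i, K i * (K i)ᴴ) p q‖ ^ 2 := by
  set A := ∑ i, K i * (K i)ᴴ with hA
  have htr : A.trace = (n : ℂ) := traceA K hK
  have hre : ∑ p, (A p p).re = (n : ℝ) := by
    have : (A.trace).re = (n : ℝ) := by rw [htr]; simp
    rw [← this]
    simp [Matrix.trace, Matrix.diag, Complex.re_sum]
  have hCS : ((n : ℝ)) ^ 2 ≤ (n : ℝ) * ∑ p, (A p p).re ^ 2 := by
    have := sq_sum_le_card_mul_sum_sq (s := (univ : Finset (Fin n)))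
      (f := fun p => (A p p).re)
    rw [hre] at this
    simpa using this
  have h1 : ∑ p, (A p p).re ^ 2 ≤ ∑ p, ‖A p p‖ ^ 2 := by
    refine Finset.sum_le_sum fun p _ => ?_
    have := Complex.abs_re_le_norm (A p p)
    have h2 : |(A p p).re| ^ 2 ≤ ‖A p p‖ ^ 2 :=
      pow_le_pow_left₀ (abs_nonneg _) this 2
    rw [_root_.sq_abs] at h2
    exact h2
  have h2 : ∑ p, ‖A p p‖ ^ 2 ≤ ∑ p, ∑ q, ‖A p q‖ ^ 2 := by
    refine Finset.sum_le_sum fun p _ => ?_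
    exact Finset.single_le_sum (f := fun q => ‖A p q‖ ^ 2) (fun q _ => by positivity) (Finset.mem_univ p)
  have hn' : (0 : ℝ) < n := by exact_mod_cast hn
  nlinarith [hCS, h1, h2]

lemma sum_comm3 {a b c : Type*} [Fintype a] [Fintype b] [Fintype c] (f : a → b → c → ℝ) :
    ∑ i, ∑ j, ∑ k, f i j k = ∑ k, ∑ i, ∑ j, f i j k :=
  calc ∑ i, ∑ j, ∑ k, f i j k
      = ∑ i, ∑ k, ∑ j, f i j k := Finset.sum_congr rfl fun i _ => Finset.sum_comm
    _ = ∑ k, ∑ i, ∑ j, f i j k := Finset.sum_comm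


/-- Let `K₁,…,K_m` be Kraus operators of a quantum channel on `ℂⁿ`
(`Σᵢ Kᵢᴴ Kᵢ = I`).  If every unit vector `φ` satisfies
`Σ_{i,j} |⟨φ|Kᵢᴴ Kⱼ|φ⟩|² ≤ 1 − ε` for some `ε ∈ (0,1)`, then
`(1/n²) Σ_{i,j} |Tr(Kᵢᴴ Kⱼ)|² ≤ 1 − (1 + 1/n)ε`. -/
theorem jamiolkowski_purity_le {n m : ℕ} (K : Fin m → Matrix (Fin n) (Fin n) ℂ)
    (hK : ∑ i, (K i)ᴴ * K i = 1) (ε : ℝ) (hε : ε ∈ Set.Ioo (0 : ℝ) 1)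
    (hout : ∀ φ : Fin n → ℂ, (∑ k, ‖φ k‖ ^ 2 = 1) →
      ∑ i, ∑ j, ‖star φ ⬝ᵥ ((K i)ᴴ * K j).mulVec φ‖ ^ 2 ≤ 1 - ε) :
    (1 / (n : ℝ) ^ 2) * ∑ i, ∑ j, ‖((K i)ᴴ * K j).trace‖ ^ 2 ≤
      1 - (1 + 1 / (n : ℝ)) * ε := by
  obtain ⟨hε0, hε1⟩ := hε
  rcases Nat.eq_zero_or_pos n with hn | hn
  · subst hn
    have : ∀ i j : Fin m, ((K i)ᴴ * K j).trace = 0 := by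
      intro i j
      simp [Matrix.trace]
    simp only [this, norm_zero]
    norm_num
    linarith
  have hn' : (0:ℝ) < n := by exact_mod_cast hn
  -- abbreviations
  set M : Fin m → Fin m → Matrix (Fin n) (Fin n) ℂ := fun i j => (K i)ᴴ * K j with hM
  -- ============ basis-vector bound ============
  have hbasis : ∀ a : Fin n, ∑ i, ∑ j, ‖(M i j) a a‖ ^ 2 ≤ 1 - ε := by
    intro a
    have hnorm : ∑ k, ‖(fun k => if k = a then (1:ℂ) else 0) k‖ ^ 2 = 1 := by
      have hx : ∀ x : Fin n, ‖(if x = a then (1:ℂ) else 0)‖ ^ 2 = if x = a then (1:ℝ) else 0 :=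
        fun x => by split_ifs <;> simp
      simp only [hx, Finset.sum_ite_eq', Finset.mem_univ, if_true]
    have h := hout _ hnorm
    have hdot : ∀ i j, star (fun k => if k = a then (1:ℂ) else 0) ⬝ᵥ
        (M i j).mulVec (fun k => if k = a then (1:ℂ) else 0) = (M i j) a a := by
      intro i j
      simp [dotProduct, Matrix.mulVec, apply_ite star, mul_ite, mul_zero, mul_one,
        ite_mul, zero_mul, one_mul, Finset.sum_ite_eq', star_one, star_zero,
        Pi.star_apply]
    simp only [hM] at hdot h ⊢
    simp only [hdot] at h
    exact h
  have hD : ∑ i, ∑ j, ∑ a, ‖(M i j) a a‖ ^ 2 ≤ n * (1 - ε) := by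
    have h1 : ∑ a : Fin n, ∑ i, ∑ j, ‖(M i j) a a‖ ^ 2 ≤ ∑ _a : Fin n, (1 - ε) :=
      Finset.sum_le_sum fun a _ => hbasis a
    rw [Finset.sum_const, Finset.card_univ, Fintype.card_fin, nsmul_eq_mul] at h1
    calc ∑ i, ∑ j, ∑ a, ‖(M i j) a a‖ ^ 2
        = ∑ a : Fin n, ∑ i, ∑ j, ‖(M i j) a a‖ ^ 2 :=
          sum_comm3 fun i j a => ‖(M i j) a a‖ ^ 2
      _ ≤ n * (1 - ε) := h1
  -- ============ phase-vector bound ============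
  set c : ℂ := ((Real.sqrt n : ℝ) : ℂ) with hc
  have hsq : c⁻¹ * c⁻¹ = (n : ℂ)⁻¹ := by
    rw [← mul_inv, hc, ← Complex.ofReal_mul, Real.mul_self_sqrt (by positivity)]
    norm_num
  have hφnorm : ∀ ζ : Fin n → Fin 4,
      ∑ k, ‖(fun k => c⁻¹ * Complex.I ^ (ζ k : ℕ)) k‖ ^ 2 = 1 := by
    intro ζ
    have : ∀ k, ‖c⁻¹ * Complex.I ^ (ζ k : ℕ)‖ ^ 2 = (n : ℝ)⁻¹ := by
      intro k
      rw [norm_mul, norm_inv, norm_pow, Complex.norm_I, one_pow, mul_one, hc]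
      rw [Complex.norm_real, Real.norm_eq_abs, _root_.abs_of_nonneg (Real.sqrt_nonneg _)]
      rw [← Real.sqrt_inv, Real.sq_sqrt (by positivity)]
    simp only [this, Finset.sum_const, Finset.card_univ, Fintype.card_fin, nsmul_eq_mul]
    field_simp
  have hφdot : ∀ (N : Matrix (Fin n) (Fin n) ℂ) (ζ : Fin n → Fin 4),
      star (fun k => c⁻¹ * Complex.I ^ (ζ k : ℕ)) ⬝ᵥ
        N.mulVec (fun k => c⁻¹ * Complex.I ^ (ζ k : ℕ))
      = (n : ℂ)⁻¹ * ∑ a, ∑ b, conj (Complex.I ^ (ζ a : ℕ)) * N a b * Complex.I ^ (ζ b : ℕ) := by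
    intro N ζ
    simp only [dotProduct, Matrix.mulVec, Pi.star_apply, Finset.mul_sum]
    refine Finset.sum_congr rfl fun a _ => ?_
    refine Finset.sum_congr rfl fun b _ => ?_
    have hstar : star (c⁻¹ * Complex.I ^ (ζ a : ℕ))
        = c⁻¹ * conj (Complex.I ^ (ζ a : ℕ)) := by
      rw [star_mul']
      congr 1
      rw [Complex.star_def, map_inv₀, hc, Complex.conj_ofReal]
    rw [hstar]
    calc c⁻¹ * conj (Complex.I ^ (ζ a : ℕ)) * (N a b * (c⁻¹ * Complex.I ^ (ζ b : ℕ)))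
        = (c⁻¹ * c⁻¹) * (conj (Complex.I ^ (ζ a : ℕ)) * N a b * Complex.I ^ (ζ b : ℕ)) := by
          ring
      _ = (n : ℂ)⁻¹ * (conj (Complex.I ^ (ζ a : ℕ)) * N a b * Complex.I ^ (ζ b : ℕ)) := by
          rw [hsq]
  have hper : ∀ ζ : Fin n → Fin 4,
      ∑ i, ∑ j, ‖∑ a, ∑ b, conj (Complex.I ^ (ζ a : ℕ)) * (M i j) a b
          * Complex.I ^ (ζ b : ℕ)‖ ^ 2 ≤ (n:ℝ)^2 * (1 - ε) := by
    intro ζ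
    have h := hout _ (hφnorm ζ)
    have heq : ∀ i j : Fin m, ‖star (fun k => c⁻¹ * Complex.I ^ (ζ k : ℕ)) ⬝ᵥ
        ((K i)ᴴ * K j).mulVec (fun k => c⁻¹ * Complex.I ^ (ζ k : ℕ))‖ ^ 2
        = (n:ℝ)⁻¹ ^ 2 * ‖∑ a, ∑ b, conj (Complex.I ^ (ζ a : ℕ)) * (M i j) a b
            * Complex.I ^ (ζ b : ℕ)‖ ^ 2 := by
      intro i j
      rw [show ((K i)ᴴ * K j) = M i j from rfl, hφdot (M i j) ζ]
      rw [norm_mul, norm_inv, Complex.norm_natCast, mul_pow]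
    simp only [heq] at h
    simp only [← Finset.mul_sum] at h
    rw [inv_pow, inv_mul_le_iff₀ (by positivity)] at h
    linarith [h]
  -- sum over all ζ
  have htotal : ∑ i, ∑ j, (4:ℝ) ^ n * (‖(M i j).trace‖ ^ 2
        + (∑ a, ∑ b, ‖(M i j) a b‖ ^ 2) - ∑ a, ‖(M i j) a a‖ ^ 2)
      ≤ 4 ^ n * ((n:ℝ)^2 * (1 - ε)) := by
    have h1 : ∑ ζ : Fin n → Fin 4, ∑ i, ∑ j,
        ‖∑ a, ∑ b, conj (Complex.I ^ (ζ a : ℕ)) * (M i j) a b * Complex.I ^ (ζ b : ℕ)‖ ^ 2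
        ≤ ∑ _ζ : Fin n → Fin 4, (n:ℝ)^2 * (1 - ε) :=
      Finset.sum_le_sum fun ζ _ => hper ζ
    rw [Finset.sum_const, Finset.card_univ, Fintype.card_fun, Fintype.card_fin,
      Fintype.card_fin, nsmul_eq_mul] at h1
    have h2 : ∑ ζ : Fin n → Fin 4, ∑ i, ∑ j,
        ‖∑ a, ∑ b, conj (Complex.I ^ (ζ a : ℕ)) * (M i j) a b * Complex.I ^ (ζ b : ℕ)‖ ^ 2
        = ∑ i, ∑ j, (4:ℝ) ^ n * (‖(M i j).trace‖ ^ 2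
          + (∑ a, ∑ b, ‖(M i j) a b‖ ^ 2) - ∑ a, ‖(M i j) a a‖ ^ 2) := by
      rw [Finset.sum_comm]
      refine Finset.sum_congr rfl fun i _ => ?_
      rw [Finset.sum_comm]
      exact Finset.sum_congr rfl fun j _ => phase_sum_re (M i j)
    rw [h2] at h1
    calc ∑ i, ∑ j, (4:ℝ) ^ n * (‖(M i j).trace‖ ^ 2
          + (∑ a, ∑ b, ‖(M i j) a b‖ ^ 2) - ∑ a, ‖(M i j) a a‖ ^ 2)
        ≤ (4^n : ℕ) * ((n:ℝ)^2 * (1-ε)) := h1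
      _ = 4 ^ n * ((n:ℝ)^2 * (1 - ε)) := by push_cast; ring
  -- extract the trace bound
  have hkey : ∑ i, ∑ j, ‖(M i j).trace‖ ^ 2
      + (∑ i, ∑ j, ∑ a, ∑ b, ‖(M i j) a b‖ ^ 2)
      - (∑ i, ∑ j, ∑ a, ‖(M i j) a a‖ ^ 2) ≤ (n:ℝ)^2 * (1 - ε) := by
    have h4 : (0:ℝ) < 4 ^ n := by positivity
    refine (mul_le_mul_iff_right₀ h4).mp ?_
    calc (4:ℝ)^n * (∑ i, ∑ j, ‖(M i j).trace‖ ^ 2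
            + (∑ i, ∑ j, ∑ a, ∑ b, ‖(M i j) a b‖ ^ 2)
            - (∑ i, ∑ j, ∑ a, ‖(M i j) a a‖ ^ 2))
        = ∑ i, ∑ j, (4:ℝ) ^ n * (‖(M i j).trace‖ ^ 2
            + (∑ a, ∑ b, ‖(M i j) a b‖ ^ 2) - ∑ a, ‖(M i j) a a‖ ^ 2) := by
          simp only [Finset.mul_sum, mul_add, mul_sub, Finset.sum_add_distrib,
            Finset.sum_sub_distrib]
      _ ≤ 4 ^ n * ((n:ℝ)^2 * (1 - ε)) := htotal
  have hF : (n:ℝ) ≤ ∑ i, ∑ j, ∑ a, ∑ b, ‖(M i j) a b‖ ^ 2 := by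
    rw [hM]
    rw [frob_sum' K]
    exact frob_lower hn K hK
  have hT : ∑ i, ∑ j, ‖(M i j).trace‖ ^ 2 ≤ (n:ℝ)^2 * (1-ε) + n * (1-ε) - n := by
    linarith [hkey, hF, hD]
  -- finish
  have hgoal : (1 / (n : ℝ) ^ 2) * ∑ i, ∑ j, ‖(M i j).trace‖ ^ 2
      ≤ (1 / (n : ℝ) ^ 2) * ((n:ℝ)^2 * (1-ε) + n * (1-ε) - n) := by
    apply mul_le_mul_of_nonneg_left hT (by positivity)
  have hrhs : (1 / (n : ℝ) ^ 2) * ((n:ℝ)^2 * (1-ε) + n * (1-ε) - n)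
      = 1 - (1 + 1 / (n : ℝ)) * ε := by
    field_simp
    ring
  rw [hrhs] at hgoal
  exact hgoal
end

section
/- If Λ is a unital trace-preserving CP map on n×n matrices, then for every density matrix ρ on ℂⁿ⊗ℂᵐ, S((Λ⊗id)(ρ)) ≥ S(ρ), where S is the von Neumann entropy. -/
open Matrix Kronecker
open scoped ComplexOrder

/-- The von Neumann entropy `S(ρ) = −Tr(ρ log ρ)` of a (Hermitian) matrix, computed
through its eigenvalues (with the convention `0 log 0 = 0`); junk value `0` for
non-Hermitian input. -/
noncomputable def vonNeumannEntropy {ι : Type*} [Fintype ι] [DecidableEq ι]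
    (ρ : Matrix ι ι ℂ) : ℝ :=
  if h : ρ.IsHermitian then -∑ i, h.eigenvalues i * Real.log (h.eigenvalues i) else 0

private lemma kron_one_cT {n m : ℕ} (A : Matrix (Fin n) (Fin n) ℂ) :
    (A ⊗ₖ (1 : Matrix (Fin m) (Fin m) ℂ))ᴴ = Aᴴ ⊗ₖ 1 := by
  ext ⟨i, j⟩ ⟨k, l⟩
  rcases eq_or_ne j l with h | h
  · simp [conjTranspose_apply, one_apply, h, mul_comm]
  · simp [conjTranspose_apply, one_apply, h, h.symm]

private lemma posSemidef_sum {N ι : Type*} [Fintype N] [DecidableEq N] [Fintype ι]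
    (f : ι → Matrix N N ℂ) (h : ∀ i, (f i).PosSemidef) : (∑ i, f i).PosSemidef := by
  classical
  refine Finset.sum_induction _ _ (fun a b ha hb => ha.add hb) Matrix.PosSemidef.zero
    (fun i _ => h i)

/-- Entropy as a sum of `negMulLog`. -/
private lemma vNE_eq {ι : Type*} [Fintype ι] [DecidableEq ι]
    {ρ : Matrix ι ι ℂ} (h : ρ.IsHermitian) :
    vonNeumannEntropy ρ = ∑ i, Real.negMulLog (h.eigenvalues i) := by
  rw [vonNeumannEntropy, dif_pos h, neg_eq_iff_eq_neg, ← Finset.sum_neg_distrib]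
  simp [Real.negMulLog]

/-- If `Λ = Σᵢ Ad_{Kᵢ}` is a unital trace-preserving CP map on `n×n`
matrices, then for every density matrix `ρ` on `ℂⁿ⊗ℂᵐ`,
`S((Λ⊗id)(ρ)) ≥ S(ρ)` for the von Neumann entropy `S`. -/
theorem entropy_nondecreasing_bistochastic {k n m : ℕ}
    (K : Fin k → Matrix (Fin n) (Fin n) ℂ)
    (hTP : ∑ i, (K i)ᴴ * K i = 1) (hU : ∑ i, K i * (K i)ᴴ = 1)
    (ρ : Matrix (Fin n × Fin m) (Fin n × Fin m) ℂ)
    (hρ : ρ.PosSemidef) (hρ1 : ρ.trace = 1) :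
    vonNeumannEntropy ρ ≤
      vonNeumannEntropy
        (∑ i, (K i ⊗ₖ (1 : Matrix (Fin m) (Fin m) ℂ)) * ρ *
          (K i ⊗ₖ (1 : Matrix (Fin m) (Fin m) ℂ))ᴴ) := by
  classical
  set A : Fin k → Matrix (Fin n × Fin m) (Fin n × Fin m) ℂ :=
    fun α => K α ⊗ₖ (1 : Matrix (Fin m) (Fin m) ℂ) with hAdef
  have hAα : ∀ α, A α = K α ⊗ₖ (1 : Matrix (Fin m) (Fin m) ℂ) := fun _ => rfl
  -- Kraus operator identities on the product space
  have hA1 : ∑ α, (A α)ᴴ * A α = 1 := by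
    have h1 : ∀ α : Fin k, (A α)ᴴ * A α
        = ((K α)ᴴ * K α) ⊗ₖ (1 : Matrix (Fin m) (Fin m) ℂ) := by
      intro α
      rw [hAα, kron_one_cT, ← mul_kronecker_mul, one_mul]
    simp_rw [h1]
    rw [show (∑ α, ((K α)ᴴ * K α) ⊗ₖ (1 : Matrix (Fin m) (Fin m) ℂ))
        = (∑ α, (K α)ᴴ * K α) ⊗ₖ (1 : Matrix (Fin m) (Fin m) ℂ) by
      induction (Finset.univ : Finset (Fin k)) using Finset.induction with
      | empty => simp [Matrix.zero_kronecker]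
      | insert _ _ h ih => simp [Finset.sum_insert h, ih, Matrix.add_kronecker]]
    rw [hTP, Matrix.one_kronecker_one]
  have hA2 : ∑ α, A α * (A α)ᴴ = 1 := by
    have h1 : ∀ α : Fin k, A α * (A α)ᴴ
        = (K α * (K α)ᴴ) ⊗ₖ (1 : Matrix (Fin m) (Fin m) ℂ) := by
      intro α
      rw [hAα, kron_one_cT, ← mul_kronecker_mul, one_mul]
    simp_rw [h1]
    rw [show (∑ α, (K α * (K α)ᴴ) ⊗ₖ (1 : Matrix (Fin m) (Fin m) ℂ))
        = (∑ α, K α * (K α)ᴴ) ⊗ₖ (1 : Matrix (Fin m) (Fin m) ℂ) by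
      induction (Finset.univ : Finset (Fin k)) using Finset.induction with
      | empty => simp [Matrix.zero_kronecker]
      | insert _ _ h ih => simp [Finset.sum_insert h, ih, Matrix.add_kronecker]]
    rw [hU, Matrix.one_kronecker_one]
  set ρ' : Matrix (Fin n × Fin m) (Fin n × Fin m) ℂ := ∑ α, A α * ρ * (A α)ᴴ with hρ'def
  have hρ'psd : ρ'.PosSemidef :=
    posSemidef_sum _ fun α => hρ.mul_mul_conjTranspose_same (A α)
  have hH : ρ.IsHermitian := hρ.1
  have hH' : ρ'.IsHermitian := hρ'psd.1
  set W : Matrix (Fin n × Fin m) (Fin n × Fin m) ℂ :=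
    (hH.eigenvectorUnitary : Matrix (Fin n × Fin m) (Fin n × Fin m) ℂ) with hWdef
  set U : Matrix (Fin n × Fin m) (Fin n × Fin m) ℂ :=
    (hH'.eigenvectorUnitary : Matrix (Fin n × Fin m) (Fin n × Fin m) ℂ) with hUdef
  have hWW : W * Wᴴ = 1 := Unitary.coe_mul_star_self _
  have hWsW : Wᴴ * W = 1 := Unitary.coe_star_mul_self _
  have hUU : U * Uᴴ = 1 := Unitary.coe_mul_star_self _
  have hUsU : Uᴴ * U = 1 := Unitary.coe_star_mul_self _
  set lam : Fin n × Fin m → ℝ := hH.eigenvalues with hlamdef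
  set mu : Fin n × Fin m → ℝ := hH'.eigenvalues with hmudef
  have hlamnn : ∀ i, 0 ≤ lam i := fun i => hρ.eigenvalues_nonneg i
  set D : Matrix (Fin n × Fin m) (Fin n × Fin m) ℂ := diagonal (RCLike.ofReal ∘ lam) with hDdef
  set M : Fin k → Matrix (Fin n × Fin m) (Fin n × Fin m) ℂ :=
    fun α => Uᴴ * A α * W with hMdef
  have hMα : ∀ α, M α = Uᴴ * A α * W := fun _ => rfl
  have hMαct : ∀ α, (M α)ᴴ = Wᴴ * (A α)ᴴ * U := by
    intro α
    rw [hMα]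
    simp only [Matrix.conjTranspose_mul, Matrix.conjTranspose_conjTranspose]
    noncomm_ring
  set B : Fin n × Fin m → Fin n × Fin m → ℝ :=
    fun j i => ∑ α, Complex.normSq (M α j i) with hBdef
  have hBα : ∀ j i, B j i = ∑ α, Complex.normSq (M α j i) := fun _ _ => rfl
  have hBnn : ∀ j i, 0 ≤ B j i := fun j i =>
    Finset.sum_nonneg fun α _ => Complex.normSq_nonneg _
  -- diagonal entries of products: useful computation
  have hdiagC : ∀ (α : Fin k) (j : Fin n × Fin m),
      (M α * D * (M α)ᴴ) j j
        = ∑ i, ((Complex.normSq (M α j i) * lam i : ℝ) : ℂ) := by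
    intro α j
    rw [Matrix.mul_apply]
    refine Finset.sum_congr rfl fun i _ => ?_
    rw [Matrix.mul_apply, Finset.sum_mul, Finset.sum_eq_single i]
    · rw [show D i i = ((lam i : ℝ) : ℂ) from by rw [hDdef, diagonal_apply_eq]; rfl,
        conjTranspose_apply]
      rw [mul_right_comm,
        show star (M α j i) = starRingEnd ℂ (M α j i) from rfl, Complex.mul_conj]
      push_cast
      ring
    · intro b _ hb
      have hD0 : D b i = 0 := by rw [hDdef]; exact diagonal_apply_ne _ hb
      rw [hD0, mul_zero, zero_mul]
    · simp
  -- the key diagonal identity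
  have key : (diagonal (RCLike.ofReal ∘ mu) : Matrix (Fin n × Fin m) (Fin n × Fin m) ℂ)
      = ∑ α, M α * D * (M α)ᴴ := by
    rw [← hH'.conjStarAlgAut_star_eigenvectorUnitary, Unitary.conjStarAlgAut_apply,
      Unitary.coe_star, star_star]
    have hρspec : ρ = W * D * Wᴴ := hH.spectral_theorem
    calc star (hH'.eigenvectorUnitary : Matrix (Fin n × Fin m) (Fin n × Fin m) ℂ) * ρ' *
          (hH'.eigenvectorUnitary : Matrix (Fin n × Fin m) (Fin n × Fin m) ℂ)
        = ∑ α, Uᴴ * (A α * ρ * (A α)ᴴ) * U := by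
          show Uᴴ * (∑ α, A α * ρ * (A α)ᴴ) * U = _
          rw [Finset.mul_sum, Finset.sum_mul]
      _ = ∑ α, M α * D * (M α)ᴴ := by
          refine Finset.sum_congr rfl fun α _ => ?_
          rw [hρspec, hMα, hMαct]
          noncomm_ring
  -- eigenvalue mixing identity
  have hmuB : ∀ j, mu j = ∑ i, B j i * lam i := by
    intro j
    have h0 := congrFun (congrFun key j) j
    rw [diagonal_apply_eq, Matrix.sum_apply] at h0
    simp_rw [hdiagC] at h0
    rw [Finset.sum_comm] at h0
    simp only [Function.comp_apply] at h0
    rw [show (RCLike.ofReal (mu j) : ℂ) = ((mu j : ℝ) : ℂ) from rfl] at h0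
    have h1 : ((mu j : ℝ) : ℂ) = ((∑ i, B j i * lam i : ℝ) : ℂ) := by
      rw [h0]
      push_cast [hBα, Finset.sum_mul]
      rfl
    exact_mod_cast h1
  -- row sums of B are 1 (unitality)
  have hMM : ∑ α, M α * (M α)ᴴ = 1 := by
    have h1 : ∀ α, M α * (M α)ᴴ = Uᴴ * (A α * (A α)ᴴ) * U := by
      intro α
      rw [hMα, hMαct]
      calc Uᴴ * A α * W * (Wᴴ * (A α)ᴴ * U)
          = Uᴴ * A α * (W * Wᴴ) * ((A α)ᴴ * U) := by noncomm_ring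
        _ = Uᴴ * (A α * (A α)ᴴ) * U := by rw [hWW, Matrix.mul_one]; noncomm_ring
    simp_rw [h1]
    rw [← Finset.sum_mul, ← Finset.mul_sum, hA2, Matrix.mul_one, hUsU]
  have hMsM : ∑ α, (M α)ᴴ * M α = 1 := by
    have h1 : ∀ α, (M α)ᴴ * M α = Wᴴ * ((A α)ᴴ * A α) * W := by
      intro α
      rw [hMα, hMαct]
      calc Wᴴ * (A α)ᴴ * U * (Uᴴ * A α * W)
          = Wᴴ * (A α)ᴴ * (U * Uᴴ) * (A α * W) := by noncomm_ring
        _ = Wᴴ * ((A α)ᴴ * A α) * W := by rw [hUU, Matrix.mul_one]; noncomm_ring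
    simp_rw [h1]
    rw [← Finset.sum_mul, ← Finset.mul_sum, hA1, Matrix.mul_one, hWsW]
  have hrow : ∀ j, ∑ i, B j i = 1 := by
    intro j
    have h0 := congrFun (congrFun hMM j) j
    rw [Matrix.sum_apply, Matrix.one_apply_eq] at h0
    have h1 : ∀ α, (M α * (M α)ᴴ) j j = ((∑ i, Complex.normSq (M α j i) : ℝ) : ℂ) := by
      intro α
      rw [Matrix.mul_apply]
      push_cast
      refine Finset.sum_congr rfl fun i _ => ?_
      rw [conjTranspose_apply,
        show star (M α j i) = starRingEnd ℂ (M α j i) from rfl, Complex.mul_conj]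
    simp_rw [h1] at h0
    have h2 : ((∑ i, B j i : ℝ) : ℂ) = ((1 : ℝ) : ℂ) := by
      push_cast [hBα]
      rw [Finset.sum_comm]
      exact_mod_cast h0
    exact_mod_cast h2
  have hcol : ∀ i, ∑ j, B j i = 1 := by
    intro i
    have h0 := congrFun (congrFun hMsM i) i
    rw [Matrix.sum_apply, Matrix.one_apply_eq] at h0
    have h1 : ∀ α, ((M α)ᴴ * M α) i i = ((∑ j, Complex.normSq (M α j i) : ℝ) : ℂ) := by
      intro α
      rw [Matrix.mul_apply]
      push_cast
      refine Finset.sum_congr rfl fun j _ => ?_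
      rw [conjTranspose_apply,
        show star (M α j i) = starRingEnd ℂ (M α j i) from rfl, mul_comm, Complex.mul_conj]
    simp_rw [h1] at h0
    have h2 : ((∑ j, B j i : ℝ) : ℂ) = ((1 : ℝ) : ℂ) := by
      push_cast [hBα]
      rw [Finset.sum_comm]
      exact_mod_cast h0
    exact_mod_cast h2
  -- entropy comparison via Jensen's inequality
  rw [vNE_eq hH, vNE_eq hH']
  calc ∑ i, Real.negMulLog (lam i)
      = ∑ i, (∑ j, B j i) * Real.negMulLog (lam i) := by
        refine Finset.sum_congr rfl fun i _ => ?_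
        rw [hcol i, one_mul]
    _ = ∑ j, ∑ i, B j i * Real.negMulLog (lam i) := by
        rw [Finset.sum_comm]
        exact Finset.sum_congr rfl fun i _ => by rw [Finset.sum_mul]
    _ ≤ ∑ j, Real.negMulLog (mu j) := by
        refine Finset.sum_le_sum fun j _ => ?_
        have hjen := Real.concaveOn_negMulLog.le_map_sum
          (t := Finset.univ) (w := fun i => B j i) (p := lam)
          (fun i _ => hBnn j i) (hrow j) (fun i _ => hlamnn i)
        rw [hmuB j]
        simpa [smul_eq_mul] using hjen
end
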